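/- Let m be a nonnegative integer and let (c_j)_{j≥1} be complex numbers with c_j = 0 for every odd j. Set u = −m(m+1)z⁻² + Σ_{j≥1} c_j z^j ∈ ℂ((z)). Then for every λ ∈ ℂ there exists ψ ∈ ℂ((z)) of the form ψ = Σ_{n≥0} a_n z^{n−m} with a₀ = 1 satisfying ψ'' + uψ = λψ. -/

import Mathlib

open HahnSeries

/-- The formal derivative of a formal Laurent series `Σₙ aₙ zⁿ ↦ Σₙ n aₙ z^{n−1}`. -/
noncomputable def laurentDeriv (f : LaurentSeries ℂ) : LaurentSeries ℂ where
  coeff n := ((n + 1 : ℤ) : ℂ) * f.coeff (n + 1)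
  isPWO_support' := by
    refine Set.IsPWO.mono (Set.IsPWO.image_of_monotone f.isPWO_support
      (f := fun m : ℤ => m - 1) (fun a b hab => by simpa using hab)) ?_
    intro n hn
    have h1 : f.coeff (n + 1) ≠ 0 := by
      intro h0
      simp only [Function.mem_support, h0, mul_zero, ne_eq, not_true_eq_false] at hn
    exact ⟨n + 1, h1, by ring⟩

noncomputable def aRec (m : ℕ) (c : ℕ → ℂ) (lam : ℂ) : ℕ → ℂ
  | 0 => 1
  | 1 => 0
  | (n+2) =>
    if n + 2 = 2*m+1 then 0 else
      (lam * aRec m c lam n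
        - ∑ j ∈ Finset.range (n+1), (if j = 0 then 0 else c j) * aRec m c lam (n - j))
      / (((n:ℂ)+2) * (((n:ℂ)+2) - (2*(m:ℂ)+1)))
  termination_by n => n
  decreasing_by all_goals omega

theorem aRec_odd (m : ℕ) (c : ℕ → ℂ) (lam : ℂ) (hodd : ∀ j : ℕ, Odd j → c j = 0) :
    ∀ n : ℕ, Odd n → aRec m c lam n = 0 := by
  intro n
  induction n using Nat.strong_induction_on with
  | _ n ih =>
    match n with
    | 0 => intro h; simp at h
    | 1 => intro _; rw [aRec]
    | (n+2) =>
      intro hn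
      have hno : Odd n := by rcases hn with ⟨t, ht⟩; exact ⟨t - 1, by omega⟩
      rw [aRec]
      split
      · rfl
      · have h1 : aRec m c lam n = 0 := ih n (by omega) hno
        have h2 : ∀ j ∈ Finset.range (n+1),
            (if j = 0 then 0 else c j) * aRec m c lam (n - j) = 0 := by
          intro j hj
          simp only [Finset.mem_range] at hj
          rcases Nat.even_or_odd j with hje | hjo
          · rcases Nat.eq_zero_or_pos j with h0 | h0
            · simp [h0]
            · have : Odd (n - j) := Nat.Odd.sub_even (by omega) hno hje
              rw [ih (n - j) (by omega) this, mul_zero]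
          · have hj0 : j ≠ 0 := by rintro rfl; simp at hjo
            rw [if_neg hj0, hodd j hjo, zero_mul]
        rw [Finset.sum_eq_zero h2, h1]
        simp

theorem aRec_rec (m : ℕ) (c : ℕ → ℂ) (lam : ℂ) (hodd : ∀ j : ℕ, Odd j → c j = 0) (n : ℕ) :
    (((n:ℂ)+2) * (((n:ℂ)+2) - (2*(m:ℂ)+1))) * aRec m c lam (n+2)
      + ∑ j ∈ Finset.range (n+1), (if j = 0 then 0 else c j) * aRec m c lam (n - j)
      = lam * aRec m c lam n := by
  rw [aRec]
  split
  · rename_i h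
    have hno : Odd n := ⟨m - 1, by omega⟩
    rw [aRec_odd m c lam hodd n hno]
    have h2 : ∀ j ∈ Finset.range (n+1),
        (if j = 0 then 0 else c j) * aRec m c lam (n - j) = 0 := by
      intro j hj
      simp only [Finset.mem_range] at hj
      rcases Nat.even_or_odd j with hje | hjo
      · rcases Nat.eq_zero_or_pos j with h0 | h0
        · simp [h0]
        · have : Odd (n - j) := Nat.Odd.sub_even (by omega) hno hje
          rw [aRec_odd m c lam hodd _ this, mul_zero]
      · have hj0 : j ≠ 0 := by rintro rfl; simp at hjo
        rw [if_neg hj0, hodd j hjo, zero_mul]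
    rw [Finset.sum_eq_zero h2]
    ring
  · rename_i h
    have hD : (((n:ℂ)+2) * (((n:ℂ)+2) - (2*(m:ℂ)+1))) ≠ 0 := by
      apply mul_ne_zero
      · have : ((n:ℂ)+2) = ((n+2 : ℕ) : ℂ) := by push_cast; ring
        rw [this]; exact Nat.cast_ne_zero.mpr (by omega)
      · intro hc
        apply h
        have : ((n+2 : ℕ) : ℂ) = ((2*m+1 : ℕ) : ℂ) := by push_cast; linear_combination hc
        exact_mod_cast this
    rw [mul_div_cancel₀ _ hD]
    ring

theorem aRec_zero (m : ℕ) (c : ℕ → ℂ) (lam : ℂ) : aRec m c lam 0 = 1 := by rw [aRec]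

theorem aRec_one (m : ℕ) (c : ℕ → ℂ) (lam : ℂ) : aRec m c lam 1 = 0 := by rw [aRec]

theorem laurentDeriv_coeff (f : LaurentSeries ℂ) (n : ℤ) :
    (laurentDeriv f).coeff n = ((n + 1 : ℤ) : ℂ) * f.coeff (n + 1) := rfl

theorem ofPS_coeff_neg (f : PowerSeries ℂ) (k : ℤ) (hk : k < 0) :
    (ofPowerSeries ℤ ℂ f).coeff k = 0 := by
  rw [ofPowerSeries_apply]
  apply embDomain_notin_range
  rintro ⟨n, hn⟩
  have h2 : (n : ℤ) = k := hn
  omega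

theorem single_shift_coeff (r : ℂ) (x : LaurentSeries ℂ) (d k : ℤ) :
    (HahnSeries.single (-d) r * x).coeff k = r * x.coeff (k + d) := by
  have h : k = (k + d) + (-d) := by ring
  conv_lhs => rw [h]
  rw [coeff_single_mul_add]

theorem ofPS_coeff (f : PowerSeries ℂ) (t : ℤ) :
    (ofPowerSeries ℤ ℂ f).coeff t = if 0 ≤ t then PowerSeries.coeff t.toNat f else 0 := by
  by_cases h : 0 ≤ t
  · rw [if_pos h]
    have h2 : t = (t.toNat : ℤ) := (Int.toNat_of_nonneg h).symm
    conv_lhs => rw [h2]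
    rw [ofPowerSeries_apply_coeff]
  · rw [if_neg h, ofPS_coeff_neg _ _ (by omega)]

theorem psi_coeff (m : ℕ) (f : PowerSeries ℂ) (k : ℤ) :
    (HahnSeries.single (-(m : ℤ)) 1 * ofPowerSeries ℤ ℂ f).coeff k
      = if 0 ≤ k + m then PowerSeries.coeff (k + m).toNat f else 0 := by
  rw [single_shift_coeff, one_mul]
  by_cases h : 0 ≤ k + (m : ℤ)
  · rw [if_pos h]
    have h2 : (k + (m : ℤ)) = ((k + m).toNat : ℤ) := (Int.toNat_of_nonneg h).symm
    conv_lhs => rw [h2]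
    rw [ofPowerSeries_apply_coeff]
  · rw [if_neg h, ofPS_coeff_neg _ _ (by omega)]

/-- In the ℤ₂-symmetric case (all odd coefficients `c_j` vanish), for
`u = −m(m+1)z⁻² + Σ_{j≥1} c_j z^j ∈ ℂ((z))` and every `λ ∈ ℂ` there is a formal
Laurent series solution of `ψ'' + uψ = λψ` of the form `ψ = Σ_{n≥0} a_n z^{n−m}`
with `a₀ = 1`. -/
theorem lower_index_solution_of_even_potential
    (m : ℕ) (c : ℕ → ℂ) (hodd : ∀ j : ℕ, Odd j → c j = 0)
    (u : LaurentSeries ℂ)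
    (hu : u = HahnSeries.single (-2 : ℤ) (-((m : ℂ) * ((m : ℂ) + 1)))
        + HahnSeries.ofPowerSeries ℤ ℂ (PowerSeries.mk fun j => if j = 0 then 0 else c j)) :
    ∀ lam : ℂ, ∃ ψ : LaurentSeries ℂ,
      laurentDeriv (laurentDeriv ψ) + u * ψ = lam • ψ ∧
      ∃ a : ℕ → ℂ, a 0 = 1 ∧
        ψ = HahnSeries.single (-(m : ℤ)) 1
          * HahnSeries.ofPowerSeries ℤ ℂ (PowerSeries.mk a) := by
  intro lam
  set a : ℕ → ℂ := aRec m c lam with ha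
  set C : PowerSeries ℂ := PowerSeries.mk (fun j => if j = 0 then 0 else c j) with hC
  set A : PowerSeries ℂ := PowerSeries.mk a with hA
  set r : ℂ := -((m : ℂ) * ((m : ℂ) + 1)) with hr
  set ψ : LaurentSeries ℂ := HahnSeries.single (-(m : ℤ)) 1 * ofPowerSeries ℤ ℂ A with hψ
  refine ⟨ψ, ?_, a, aRec_zero m c lam, rfl⟩
  have hmul : u * ψ = HahnSeries.single (-(2 : ℤ)) r * ψ
      + HahnSeries.single (-(m : ℤ)) 1 * ofPowerSeries ℤ ℂ (C * A) := by
    rw [hu, hψ, map_mul]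
    push_cast
    ring
  rw [hmul]
  apply HahnSeries.coeff_injective
  funext k
  have e1 : ∀ j : ℤ, ψ.coeff j = if 0 ≤ j + m then a ((j + m).toNat) else 0 := by
    intro j
    rw [hψ, psi_coeff]
    split <;> simp [hA, PowerSeries.coeff_mk]
  simp only [HahnSeries.coeff_add, HahnSeries.coeff_smul, laurentDeriv_coeff,
    single_shift_coeff, ofPS_coeff, e1, smul_eq_mul, one_mul]
  by_cases h0 : 0 ≤ k + (m : ℤ)
  · set N : ℕ := (k + m).toNat with hN
    have hNk : (k : ℤ) = (N : ℤ) - m := by omega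
    have hkC : (k : ℂ) = (N : ℂ) - m := by exact_mod_cast hNk
    simp only [if_pos (show (0:ℤ) ≤ k + 1 + 1 + m by omega),
      if_pos (show (0:ℤ) ≤ k + 2 + m by omega), if_pos h0,
      (show (k + 1 + 1 + (m:ℤ)).toNat = N + 2 by omega),
      (show (k + 2 + (m:ℤ)).toNat = N + 2 by omega)]
    rw [PowerSeries.coeff_mul, Finset.Nat.sum_antidiagonal_eq_sum_range_succ_mk]
    simp only [hC, hA, PowerSeries.coeff_mk, ha]
    push_cast
    rw [hkC]
    linear_combination aRec_rec m c lam hodd N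
  · by_cases h2 : 0 ≤ k + 2 + (m : ℤ)
    · have hcase : k + (m:ℤ) = -1 ∨ k + (m:ℤ) = -2 := by omega
      rcases hcase with h | h
      · simp only [if_neg h0, if_pos (show (0:ℤ) ≤ k + 1 + 1 + m by omega),
          if_pos (show (0:ℤ) ≤ k + 2 + m by omega),
          (show (k + 1 + 1 + (m:ℤ)).toNat = 1 by omega),
          (show (k + 2 + (m:ℤ)).toNat = 1 by omega), ha, aRec_one]
        ring
      · simp only [if_neg h0, if_pos (show (0:ℤ) ≤ k + 1 + 1 + m by omega),
          if_pos (show (0:ℤ) ≤ k + 2 + m by omega),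
          (show (k + 1 + 1 + (m:ℤ)).toNat = 0 by omega),
          (show (k + 2 + (m:ℤ)).toNat = 0 by omega), ha, aRec_zero, hr]
        have hkC : (k : ℂ) = -(m : ℂ) - 2 := by
          have : (k : ℤ) = -(m : ℤ) - 2 := by omega
          exact_mod_cast this
        push_cast
        rw [hkC]
        ring
    · simp only [if_neg h0, if_neg (show ¬ (0:ℤ) ≤ k + 1 + 1 + m by omega),
        if_neg (show ¬ (0:ℤ) ≤ k + 2 + m by omega)]
      ring
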